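/- Let (M, J, g) be a metallic pseudo-Riemannian manifold and ∇ a torsion-free connection. Then the Tachibana operator satisfies (Φ_J g)(X,Y,Z) = C(Y,Z,JX) − Γ(Y,Z,X) + g((∇_Y J)X, Z) + g((∇_Z J)X, Y), where C = ∇g, Γ = ∇G, G(X,Y) = g(JX,Y). -/
import Mathlib


variable {A : Type*} [CommRing A] [Algebra ℝ A]
variable {V : Type*} [AddCommGroup V] [Module ℝ V] [Module A V] [IsScalarTower ℝ A V]

/-- Covariant derivative `(D_X T) Y` of a (1,1)-tensor field `T`. -/
def covT (D : V → V → V) (T : V → V) (X Y : V) : V := D X (T Y) - T (D X Y)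

/-- `covM Dact D h X Y Z = (D_Z h)(X,Y)`, the covariant derivative of a
(0,2)-tensor field `h`, where `Dact` is the action of vector fields on functions. -/
def covM (Dact : V → A → A) (D : V → V → V) (h : V → V → A) (X Y Z : V) : A :=
  Dact Z (h X Y) - h (D Z X) Y - h X (D Z Y)

/-- Tachibana operator (Φ_T g)(X,Y,Z) applied to the metric g, where
(L_X T)Y = [X,TY] − T[X,Y]. -/
def tachi (Dact : V → A → A) (bracket : V → V → V) (g : V → V → A)
    (T : V → V) (X Y Z : V) : A :=
  Dact (T X) (g Y Z) - Dact X (g (T Y) Z)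
    + g (bracket Y (T X) - T (bracket Y X)) Z
    + g Y (bracket Z (T X) - T (bracket Z X))

/-- for a torsion-free connection ∇,
(Φ_J g)(X,Y,Z) = C(Y,Z,JX) − Γ(Y,Z,X) + g((∇_Y J)X, Z) + g((∇_Z J)X, Y). -/
theorem tachibana_formula
    (Dact : V → A → A) (bracket D : V → V → V)
    (g : V →ₗ[A] V →ₗ[A] A) (J : V →ₗ[A] V) (p q : ℝ)
    (hsym : ∀ X Y, g X Y = g Y X)
    (hJsym : ∀ X Y, g (J X) Y = g X (J Y))
    (hJ2 : ∀ X, J (J X) = p • J X + q • X)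
    (htf : ∀ X Y, D X Y - D Y X = bracket X Y) :
    ∀ X Y Z, tachi Dact bracket (fun a b => g a b) (⇑J) X Y Z
      = covM Dact D (fun a b => g a b) Y Z (J X)
        - covM Dact D (fun a b => g (J a) b) Y Z X
        + g (covT D (⇑J) Y X) Z + g (covT D (⇑J) Z X) Y := by
  intro X Y Z
  simp only [tachi, covM, covT, ← htf, map_sub, LinearMap.sub_apply,
    hsym Y (J (D X Z)), hsym (D Z (J X)) Y, hsym (J (D Z X)) Y, hJsym]
  ring
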